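/- Fix n₀ ≥ 1 and suppose P, Q : ℕ → ℝ are nonnegative with P(0) = Q(0) = 1, P(n) = Σ_{i=1}^n Q(i)·P(n-i) for n ≥ 1, P(n) > 0 for all n, and Q(n)/P(n) ≤ Q(n₀)/P(n₀) =: R < 1 for all n > n₀. Define U : ℕ → ℝ by U(n) = P(n) for n ≤ n₀ and, for n > n₀, U(n) = (1/(1-R))·(Σ_{i=1}^{n₀} Q(i)·U(n-i) + Σ_{i=n₀+1}^{n-1} R·U(i)·U(n-i)). Then U(n) ≥ P(n) for all n ≥ 0. -/

import Mathlib

theorem stmt9 (n₀ : ℕ) (hn₀ : 1 ≤ n₀) (P Q U : ℕ → ℝ)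
    (hQnn : ∀ n, 0 ≤ Q n) (hP0 : P 0 = 1) (hQ0 : Q 0 = 1)
    (hPpos : ∀ n, 0 < P n)
    (hrec : ∀ n : ℕ, 1 ≤ n → P n = ∑ i ∈ Finset.Icc 1 n, Q i * P (n - i))
    (R : ℝ) (hR : R = Q n₀ / P n₀) (hR1 : R < 1)
    (hratio : ∀ n, n₀ < n → Q n / P n ≤ R)
    (hU1 : ∀ n, n ≤ n₀ → U n = P n)
    (hU2 : ∀ n, n₀ < n → U n = (1 / (1 - R)) *
      (∑ i ∈ Finset.Icc 1 n₀, Q i * U (n - i) +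
        ∑ i ∈ Finset.Icc (n₀ + 1) (n - 1), R * U i * U (n - i))) :
    ∀ n : ℕ, P n ≤ U n := by
  have h1R : 0 < 1 - R := by linarith
  have hRnn : 0 ≤ R := by
    rw [hR]; exact div_nonneg (hQnn _) (hPpos _).le
  intro n
  induction n using Nat.strong_induction_on with
  | _ n IH =>
    by_cases hle : n ≤ n₀
    · rw [hU1 n hle]
    · push_neg at hle
      have hn1 : 1 ≤ n := le_trans hn₀ hle.le
      have hUge : ∀ m, m < n → P m ≤ U m := fun m hm => IH m hm
      have hUnn : ∀ m, m < n → 0 ≤ U m := fun m hm =>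
        le_trans (hPpos m).le (hUge m hm)
      -- split the recurrence sum
      have hsplit : P n = (∑ i ∈ Finset.Icc 1 n₀, Q i * P (n - i))
          + (∑ i ∈ Finset.Icc (n₀+1) (n-1), Q i * P (n - i)) + Q n * P 0 := by
        rw [hrec n hn1]
        have e1 : Finset.Icc 1 n = Finset.Ioc 0 n := by
          rw [← Finset.Icc_add_one_left_eq_Ioc]; rfl
        have e2 : Finset.Icc 1 n₀ = Finset.Ioc 0 n₀ := by
          rw [← Finset.Icc_add_one_left_eq_Ioc]; rfl
        have e3 : Finset.Icc (n₀+1) (n-1) = Finset.Ioc n₀ (n-1) := by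
          rw [← Finset.Icc_add_one_left_eq_Ioc]
        rw [e1, e2, e3]
        rw [← Finset.sum_Ioc_consecutive (fun i => Q i * P (n - i))
          (Nat.zero_le n₀) hle.le]
        have hn' : n = (n - 1) + 1 := by omega
        have := Finset.sum_Ioc_succ_top (a := n₀) (b := n - 1)
          (f := fun i => Q i * P (n - i)) (by omega)
        rw [← hn'] at this
        rw [this, Nat.sub_self]; ring
      -- bound each piece
      have hA : ∑ i ∈ Finset.Icc 1 n₀, Q i * P (n - i)
          ≤ ∑ i ∈ Finset.Icc 1 n₀, Q i * U (n - i) := by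
        apply Finset.sum_le_sum
        intro i hi
        rw [Finset.mem_Icc] at hi
        exact mul_le_mul_of_nonneg_left (hUge (n - i) (by omega)) (hQnn i)
      have hB : ∑ i ∈ Finset.Icc (n₀+1) (n-1), Q i * P (n - i)
          ≤ ∑ i ∈ Finset.Icc (n₀+1) (n-1), R * U i * U (n - i) := by
        apply Finset.sum_le_sum
        intro i hi
        rw [Finset.mem_Icc] at hi
        have hQi : Q i ≤ R * P i := by
          have := hratio i (by omega)
          rw [div_le_iff₀ (hPpos i)] at this
          linarith [this]
        calc Q i * P (n - i) ≤ (R * P i) * P (n - i) :=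
              mul_le_mul_of_nonneg_right hQi (hPpos _).le
          _ ≤ (R * U i) * P (n - i) :=
              mul_le_mul_of_nonneg_right
                (mul_le_mul_of_nonneg_left (hUge i (by omega)) hRnn) (hPpos _).le
          _ ≤ R * U i * U (n - i) :=
              mul_le_mul_of_nonneg_left (hUge (n - i) (by omega))
                (mul_nonneg hRnn (hUnn i (by omega)))
      have hC : Q n * P 0 ≤ R * P n := by
        have := hratio n hle
        rw [div_le_iff₀ (hPpos n)] at this
        rw [hP0]; linarith
      have key : P n * (1 - R) ≤
          (∑ i ∈ Finset.Icc 1 n₀, Q i * U (n - i)) +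
          (∑ i ∈ Finset.Icc (n₀+1) (n-1), R * U i * U (n - i)) := by
        nlinarith [hsplit, hA, hB, hC]
      rw [hU2 n hle, one_div, inv_mul_eq_div, le_div_iff₀ h1R]
      linarith [key]
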